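/- On a 4-dimensional hypercomplex manifold (M,I,J,K), every hyperhermitian metric g is Einstein–Weyl with respect to the Obata connection; in particular there exists a 1-form ω such that ∇^Ob g = ω ⊗ g, and consequently dF_I = ω ∧ F_I, dF_J = ω ∧ F_J and dF_K = ω ∧ F_K. -/

import Mathlib

noncomputable section

open Function

namespace HKTPaper

variable {E : Type*} [NormedAddCommGroup E] [NormedSpace ℝ E] [FiniteDimensional ℝ E]

/-- Exterior derivative of a function, in flat coordinates. -/
def d0 (f : E → ℝ) : E → E → ℝ := fun x u => fderiv ℝ f x u

/-- Exterior derivative of a 1-form (evaluated on constant vector fields), flat coordinates. -/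
def d1 (θ : E → E → ℝ) : E → E → E → ℝ := fun x u v =>
  fderiv ℝ (fun y => θ y v) x u - fderiv ℝ (fun y => θ y u) x v

/-- Exterior derivative of a 2-form, flat coordinates. -/
def d2 (F : E → E → E → ℝ) : E → E → E → E → ℝ := fun x u v w =>
  fderiv ℝ (fun y => F y v w) x u - fderiv ℝ (fun y => F y u w) x v
    + fderiv ℝ (fun y => F y u v) x w

variable {P : Type*}

/-- Action of an almost complex structure on 1-forms: `(𝓘θ)(X) = -θ(𝓘X)`. -/
def act1 (I : P → E →L[ℝ] E) (θ : P → E → ℝ) : P → E → ℝ := fun x u => -θ x (I x u)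

/-- Action of an almost complex structure on 2-forms: `(𝓘ω)(X,Y) = ω(𝓘X,𝓘Y)`. -/
def act2 (I : P → E →L[ℝ] E) (F : P → E → E → ℝ) : P → E → E → ℝ := fun x u v =>
  F x (I x u) (I x v)

/-- Action of an almost complex structure on 3-forms: `(𝓘ω)(X,Y,Z) = -ω(𝓘X,𝓘Y,𝓘Z)`. -/
def act3 (I : P → E →L[ℝ] E) (G : P → E → E → E → ℝ) : P → E → E → E → ℝ := fun x u v w =>
  -G x (I x u) (I x v) (I x w)

/-- `d_𝓘` on functions: `d_𝓘 f = 𝓘 d (𝓘 f)`. -/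
def dc0 (I : E → E →L[ℝ] E) (f : E → ℝ) : E → E → ℝ := act1 I (d0 f)

/-- `d_𝓘` on 1-forms: `d_𝓘 θ = (-1)¹ 𝓘 d (𝓘 θ)`. -/
def dc1 (I : E → E →L[ℝ] E) (θ : E → E → ℝ) : E → E → E → ℝ := fun x u v =>
  -(act2 I (d1 (act1 I θ)) x u v)

/-- Lie bracket of vector fields, flat coordinates. -/
def lieBracket (X Y : E → E) : E → E := fun x => fderiv ℝ Y x (X x) - fderiv ℝ X x (Y x)

/-- Nijenhuis tensor `N(X,Y) = [𝓘X,𝓘Y] - 𝓘[𝓘X,Y] - 𝓘[X,𝓘Y] - [X,Y]` evaluated on the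
constant vector fields with values `u`, `v`. -/
def nijTensor (I : E → E →L[ℝ] E) (u v : E) : E → E := fun x =>
  lieBracket (fun y => I y u) (fun y => I y v) x
    - I x (lieBracket (fun y => I y u) (fun _ => v) x)
    - I x (lieBracket (fun _ => u) (fun y => I y v) x)
    - lieBracket (fun _ => u) (fun _ => v) x

/-- An almost complex structure on an open set `U`. -/
structure IsAcsOn (U : Set E) (I : E → E →L[ℝ] E) : Prop where
  smooth : ContDiffOn ℝ (⊤ : ℕ∞) I U
  square : ∀ x ∈ U, ∀ v, I x (I x v) = -v

/-- Integrability (vanishing of the Nijenhuis tensor). -/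
def IntegrableOn (U : Set E) (I : E → E →L[ℝ] E) : Prop :=
  ∀ u v : E, ∀ x ∈ U, nijTensor I u v x = 0

/-- A hypercomplex structure on an open set `U`: three integrable almost complex structures
with `IJ = -JI = K`. -/
structure IsHypercomplexOn (U : Set E) (I J K : E → E →L[ℝ] E) : Prop where
  acsI : IsAcsOn U I
  acsJ : IsAcsOn U J
  acsK : IsAcsOn U K
  mulIJ : ∀ x ∈ U, ∀ v, I x (J x v) = K x v
  mulJI : ∀ x ∈ U, ∀ v, J x (I x v) = -(K x v)
  intI : IntegrableOn U I
  intJ : IntegrableOn U J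
  intK : IntegrableOn U K

/-- A hyperhermitian (possibly indefinite) metric on `U`. -/
structure IsHyperHermitianOn (U : Set E) (I J K : E → E →L[ℝ] E)
    (g : E → E →ₗ[ℝ] E →ₗ[ℝ] ℝ) : Prop where
  smooth : ∀ u v : E, ContDiffOn ℝ (⊤ : ℕ∞) (fun x => g x u v) U
  symm : ∀ x ∈ U, ∀ u v, g x u v = g x v u
  nondeg : ∀ x ∈ U, ∀ u, (∀ v, g x u v = 0) → u = 0
  hermI : ∀ x ∈ U, ∀ u v, g x (I x u) (I x v) = g x u v
  hermJ : ∀ x ∈ U, ∀ u v, g x (J x u) (J x v) = g x u v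
  hermK : ∀ x ∈ U, ∀ u v, g x (K x u) (K x v) = g x u v

/-- The Kähler form `F_𝓘 = g(𝓘·,·)`. -/
def kaehlerForm (I : E → E →L[ℝ] E) (g : E → E →ₗ[ℝ] E →ₗ[ℝ] ℝ) : E → E → E → ℝ :=
  fun x u v => g x (I x u) v

/-- The HKT condition `I dF_I = J dF_J = K dF_K` on `U`. -/
def IsHKTOn (U : Set E) (I J K : E → E →L[ℝ] E) (g : E → E →ₗ[ℝ] E →ₗ[ℝ] ℝ) : Prop :=
  (∀ x ∈ U, ∀ u v w, act3 I (d2 (kaehlerForm I g)) x u v w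
      = act3 J (d2 (kaehlerForm J g)) x u v w) ∧
  (∀ x ∈ U, ∀ u v w, act3 J (d2 (kaehlerForm J g)) x u v w
      = act3 K (d2 (kaehlerForm K g)) x u v w)

/-- `μ` is an HKT potential for `g` on `U`:
`F_I = ½(dd_I + d_J d_K)μ`, `F_J = ½(dd_J + d_K d_I)μ`, `F_K = ½(dd_K + d_I d_J)μ`. -/
def IsHKTPotentialOn (U : Set E) (I J K : E → E →L[ℝ] E)
    (g : E → E →ₗ[ℝ] E →ₗ[ℝ] ℝ) (μ : E → ℝ) : Prop :=
  ∀ x ∈ U, ∀ u v,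
    kaehlerForm I g x u v = (1 / 2) * (d1 (dc0 I μ) x u v + dc1 J (dc0 K μ) x u v) ∧
    kaehlerForm J g x u v = (1 / 2) * (d1 (dc0 J μ) x u v + dc1 K (dc0 I μ) x u v) ∧
    kaehlerForm K g x u v = (1 / 2) * (d1 (dc0 K μ) x u v + dc1 I (dc0 J μ) x u v)

end HKTPaper

namespace HKTPaper

variable {E : Type*} [NormedAddCommGroup E] [NormedSpace ℝ E] [FiniteDimensional ℝ E]

/-- The Obata connection, recorded by its Christoffel tensor `Γ`:
`∇_u Y = D_u Y + Γ(u, Y)`. -/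
structure IsObataOn (U : Set E) (I J K : E → E →L[ℝ] E)
    (Γ : E → E →L[ℝ] E →L[ℝ] E) : Prop where
  torsionFree : ∀ x ∈ U, ∀ u v, Γ x u v = Γ x v u
  parI : ∀ x ∈ U, ∀ u v, fderiv ℝ (fun y => I y v) x u + Γ x u (I x v) = I x (Γ x u v)
  parJ : ∀ x ∈ U, ∀ u v, fderiv ℝ (fun y => J y v) x u + Γ x u (J x v) = J x (Γ x u v)
  parK : ∀ x ∈ U, ∀ u v, fderiv ℝ (fun y => K y v) x u + Γ x u (K x v) = K x (Γ x u v)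

/-- Curvature tensor `R(u,v)w` of the connection with Christoffel tensor `Γ`, in flat
coordinates (evaluated on constant vector fields). -/
def curv (Γ : E → E →L[ℝ] E →L[ℝ] E) : E → E → E → E → E := fun x u v w =>
  fderiv ℝ (fun y => Γ y v w) x u - fderiv ℝ (fun y => Γ y u w) x v
    + Γ x u (Γ x v w) - Γ x v (Γ x u w)

/-- The Ricci tensor `Ric(v,w) = Trace (u ↦ R(u,v)w)`, computed in a basis `b`. -/
def ricci (Γ : E → E →L[ℝ] E →L[ℝ] E) (b : Module.Basis (Fin 4) ℝ E) : E → E → E → ℝ :=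
  fun x v w => ∑ i, b.repr (curv Γ x (b i) v w) i

/-- Wedge product of a 1-form and a 2-form:
`(ω ∧ F)(u,v,w) = ω(u)F(v,w) - ω(v)F(u,w) + ω(w)F(u,v)`. -/
def wedge12 (ω : E → E → ℝ) (F : E → E → E → ℝ) : E → E → E → E → ℝ := fun x u v w =>
  ω x u * F x v w - ω x v * F x u w + ω x w * F x u v


open Topology

/-- Quaternion relations for a triple of endomorphisms at a point. -/
structure QuatRel (Ix Jx Kx : E →L[ℝ] E) : Prop where
  i2 : ∀ v, Ix (Ix v) = -v
  j2 : ∀ v, Jx (Jx v) = -v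
  k2 : ∀ v, Kx (Kx v) = -v
  ij : ∀ v, Ix (Jx v) = Kx v
  ji : ∀ v, Jx (Ix v) = -(Kx v)

namespace QuatRel

variable {Ix Jx Kx : E →L[ℝ] E}

theorem ik (h : QuatRel Ix Jx Kx) : ∀ v, Ix (Kx v) = -(Jx v) := fun v => by
  rw [← h.ij, h.i2]
theorem kj (h : QuatRel Ix Jx Kx) : ∀ v, Kx (Jx v) = -(Ix v) := fun v => by
  rw [← h.ij, h.j2, map_neg]
theorem ki (h : QuatRel Ix Jx Kx) : ∀ v, Kx (Ix v) = Jx v := fun v => by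
  rw [← h.ij, h.ji, map_neg, h.ik, neg_neg]
theorem jk (h : QuatRel Ix Jx Kx) : ∀ v, Jx (Kx v) = Ix v := fun v => by
  rw [← h.ij, h.ji, h.kj, neg_neg]

theorem cycJKI (h : QuatRel Ix Jx Kx) : QuatRel Jx Kx Ix :=
  ⟨h.j2, h.k2, h.i2, h.jk, h.kj⟩
theorem cycKIJ (h : QuatRel Ix Jx Kx) : QuatRel Kx Ix Jx :=
  ⟨h.k2, h.i2, h.j2, h.ki, h.ik⟩

theorem basis_indep (h : QuatRel Ix Jx Kx) {u : E} (hu : u ≠ 0) :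
    LinearIndependent ℝ ![u, Ix u, Jx u, Kx u] := by
  rw [Fintype.linearIndependent_iff]
  intro c hc
  have hsum : c 0 • u + c 1 • Ix u + c 2 • Jx u + c 3 • Kx u = 0 := by
    simpa [Fin.sum_univ_four] using hc
  have key : (c 0 ^ 2 + c 1 ^ 2 + c 2 ^ 2 + c 3 ^ 2) • u = 0 := by
    have happ : c 0 • (c 0 • u + c 1 • Ix u + c 2 • Jx u + c 3 • Kx u)
        - c 1 • Ix (c 0 • u + c 1 • Ix u + c 2 • Jx u + c 3 • Kx u)
        - c 2 • Jx (c 0 • u + c 1 • Ix u + c 2 • Jx u + c 3 • Kx u)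
        - c 3 • Kx (c 0 • u + c 1 • Ix u + c 2 • Jx u + c 3 • Kx u) = 0 := by
      rw [hsum]; simp
    simp only [map_add, map_smul, h.i2, h.j2, h.k2, h.ij, h.ji, h.ik, h.ki, h.jk, h.kj,
      smul_add, smul_neg, smul_smul] at happ
    rw [show (c 0 ^ 2 + c 1 ^ 2 + c 2 ^ 2 + c 3 ^ 2 : ℝ) • u
      = c 0 • (c 0 • u + c 1 • Ix u + c 2 • Jx u + c 3 • Kx u)
        - c 1 • Ix (c 0 • u + c 1 • Ix u + c 2 • Jx u + c 3 • Kx u)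
        - c 2 • Jx (c 0 • u + c 1 • Ix u + c 2 • Jx u + c 3 • Kx u)
        - c 3 • Kx (c 0 • u + c 1 • Ix u + c 2 • Jx u + c 3 • Kx u) from ?_, hsum]
    · simp
    · simp only [map_add, map_smul, h.i2, h.j2, h.k2, h.ij, h.ji, h.ik, h.ki, h.jk, h.kj,
        smul_add, smul_neg, smul_smul]
      module
  have hcoef : c 0 ^ 2 + c 1 ^ 2 + c 2 ^ 2 + c 3 ^ 2 = 0 := by
    by_contra hne
    exact hu (by simpa [hne] using smul_eq_zero.mp key)
  intro i
  have h0 : c 0 = 0 := by nlinarith [sq_nonneg (c 0), sq_nonneg (c 1), sq_nonneg (c 2), sq_nonneg (c 3)]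
  have h1 : c 1 = 0 := by nlinarith [sq_nonneg (c 0), sq_nonneg (c 1), sq_nonneg (c 2), sq_nonneg (c 3)]
  have h2 : c 2 = 0 := by nlinarith [sq_nonneg (c 0), sq_nonneg (c 1), sq_nonneg (c 2), sq_nonneg (c 3)]
  have h3 : c 3 = 0 := by nlinarith [sq_nonneg (c 0), sq_nonneg (c 1), sq_nonneg (c 2), sq_nonneg (c 3)]
  fin_cases i <;> assumption

end QuatRel

section Proportional

variable {Ix Jx Kx : E →L[ℝ] E}
variable {g h : E →L[ℝ] E →L[ℝ] ℝ}

theorem herm_diag_orth (hq : QuatRel Ix Jx Kx) (hsym : ∀ u v, h u v = h v u)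
    (hI : ∀ u v, h (Ix u) (Ix v) = h u v) (u : E) : h u (Ix u) = 0 := by
  have h1 : h u (Ix u) = h (Ix u) (Ix (Ix u)) := (hI u (Ix u)).symm
  rw [hq.i2, map_neg, hsym] at h1
  have := hsym u (Ix u)
  linarith

theorem claim1 (hq : QuatRel Ix Jx Kx) (hdim : Module.finrank ℝ E = 4)
    (hsym : ∀ u v, h u v = h v u)
    (hI : ∀ u v, h (Ix u) (Ix v) = h u v)
    (hJ : ∀ u v, h (Jx u) (Jx v) = h u v)
    (hK : ∀ u v, h (Kx u) (Kx v) = h u v)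
    (gsym : ∀ u v, g u v = g v u)
    (gI : ∀ u v, g (Ix u) (Ix v) = g u v)
    (gJ : ∀ u v, g (Jx u) (Jx v) = g u v)
    (gK : ∀ u v, g (Kx u) (Kx v) = g u v)
    (u v : E) : h u v * g u u = g u v * h u u := by
  rcases eq_or_ne u 0 with rfl | hu
  · simp
  have hbi := hq.basis_indep hu
  let B : Module.Basis (Fin 4) ℝ E := basisOfLinearIndependentOfCardEqFinrank hbi (by simp [hdim])
  have hB : ⇑B = ![u, Ix u, Jx u, Kx u] := coe_basisOfLinearIndependentOfCardEqFinrank hbi _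
  have hv : v = B.repr v 0 • u + B.repr v 1 • Ix u + B.repr v 2 • Jx u + B.repr v 3 • Kx u := by
    conv_lhs => rw [← B.sum_repr v]
    simp [Fin.sum_univ_four, hB]
  have horthI : h u (Ix u) = 0 := herm_diag_orth hq hsym hI u
  have horthJ : h u (Jx u) = 0 := herm_diag_orth hq.cycJKI hsym hJ u
  have horthK : h u (Kx u) = 0 := herm_diag_orth hq.cycKIJ hsym hK u
  have gorthI : g u (Ix u) = 0 := herm_diag_orth hq gsym gI u
  have gorthJ : g u (Jx u) = 0 := herm_diag_orth hq.cycJKI gsym gJ u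
  have gorthK : g u (Kx u) = 0 := herm_diag_orth hq.cycKIJ gsym gK u
  have hv1 : h u v = B.repr v 0 * h u u := by
    conv_lhs => rw [hv]
    simp [horthI, horthJ, horthK]
  have hv2 : g u v = B.repr v 0 * g u u := by
    conv_lhs => rw [hv]
    simp [gorthI, gorthJ, gorthK]
  rw [hv1, hv2]; ring

theorem herm_proportional (hq : QuatRel Ix Jx Kx) (hdim : Module.finrank ℝ E = 4)
    (hsym : ∀ u v, h u v = h v u)
    (hI : ∀ u v, h (Ix u) (Ix v) = h u v)
    (hJ : ∀ u v, h (Jx u) (Jx v) = h u v)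
    (hK : ∀ u v, h (Kx u) (Kx v) = h u v)
    (gsym : ∀ u v, g u v = g v u)
    (gI : ∀ u v, g (Ix u) (Ix v) = g u v)
    (gJ : ∀ u v, g (Jx u) (Jx v) = g u v)
    (gK : ∀ u v, g (Kx u) (Kx v) = g u v)
    (u₀ : E) (hu₀ : g u₀ u₀ ≠ 0)
    (v w : E) : h v w * g u₀ u₀ = h u₀ u₀ * g v w := by
  have c1 := fun u v => claim1 hq hdim hsym hI hJ hK gsym gI gJ gK u v
  have diag : ∀ u : E, h u u * g u₀ u₀ = h u₀ u₀ * g u u := by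
    intro u
    rcases eq_or_ne (g u u₀) 0 with hz | hnz
    · have e1 : g (u + u₀) u₀ ≠ 0 := by
        have he : g (u + u₀) u₀ = g u u₀ + g u₀ u₀ := by simp
        rw [he, hz, zero_add]; exact hu₀
      have e2 : g (u - u₀) u₀ ≠ 0 := by
        have he : g (u - u₀) u₀ = g u u₀ - g u₀ u₀ := by simp
        rw [he, hz, zero_sub]; simpa using hu₀
      have d1 : h (u + u₀) (u + u₀) * g u₀ u₀ = h u₀ u₀ * g (u + u₀) (u + u₀) := by
        have c := c1 (u + u₀) u₀
        have c' := c1 u₀ (u + u₀)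
        have key : h (u + u₀) u₀ * g u₀ u₀ = g (u + u₀) u₀ * h u₀ u₀ := by
          rw [hsym (u + u₀) u₀, gsym (u + u₀) u₀]; linarith
        have hzero : (h (u + u₀) (u + u₀) * g u₀ u₀ - h u₀ u₀ * g (u + u₀) (u + u₀))
            * g (u + u₀) u₀ = 0 := by
          linear_combination (-(g u₀ u₀)) * c + (g (u + u₀) (u + u₀)) * key
        have := (mul_eq_zero.mp hzero).resolve_right e1
        linarith
      have d2 : h (u - u₀) (u - u₀) * g u₀ u₀ = h u₀ u₀ * g (u - u₀) (u - u₀) := by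
        have c := c1 (u - u₀) u₀
        have c' := c1 u₀ (u - u₀)
        have key : h (u - u₀) u₀ * g u₀ u₀ = g (u - u₀) u₀ * h u₀ u₀ := by
          rw [hsym (u - u₀) u₀, gsym (u - u₀) u₀]; linarith
        have hzero : (h (u - u₀) (u - u₀) * g u₀ u₀ - h u₀ u₀ * g (u - u₀) (u - u₀))
            * g (u - u₀) u₀ = 0 := by
          linear_combination (-(g u₀ u₀)) * c + (g (u - u₀) (u - u₀)) * key
        have := (mul_eq_zero.mp hzero).resolve_right e2
        linarith
      have ha : h (u + u₀) (u + u₀) + h (u - u₀) (u - u₀) = 2 * h u u + 2 * h u₀ u₀ := by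
        simp only [map_add, map_sub, ContinuousLinearMap.add_apply, ContinuousLinearMap.sub_apply]
        have := hsym u u₀; linarith
      have hb : g (u + u₀) (u + u₀) + g (u - u₀) (u - u₀) = 2 * g u u + 2 * g u₀ u₀ := by
        simp only [map_add, map_sub, ContinuousLinearMap.add_apply, ContinuousLinearMap.sub_apply]
        have := gsym u u₀; linarith
      linear_combination (1/2) * d1 + (1/2) * d2 - ((g u₀ u₀)/2) * ha + ((h u₀ u₀)/2) * hb
    · have c := c1 u u₀
      have c' := c1 u₀ u
      have key : h u u₀ * g u₀ u₀ = g u u₀ * h u₀ u₀ := by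
        rw [hsym u u₀, gsym u u₀]; linarith
      have hzero : (h u u * g u₀ u₀ - h u₀ u₀ * g u u) * g u u₀ = 0 := by
        linear_combination (-(g u₀ u₀)) * c + (g u u) * key
      have := (mul_eq_zero.mp hzero).resolve_right hnz
      linarith
  have hd0 := diag (v + w); have hd1 := diag v; have hd2 := diag w
  have h1 : 2 * h v w = h (v+w) (v+w) - h v v - h w w := by
    simp only [map_add, ContinuousLinearMap.add_apply]
    have := hsym v w; linarith
  have h2 : 2 * g v w = g (v+w) (v+w) - g v v - g w w := by
    simp only [map_add, ContinuousLinearMap.add_apply]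
    have := gsym v w; linarith
  linear_combination (1/2) * hd0 - (1/2) * hd1 - (1/2) * hd2 + ((g u₀ u₀)/2) * h1
    - ((h u₀ u₀)/2) * h2

/-- Existence of a vector with nonzero `g`-square, from nondegeneracy. -/
theorem exists_diag_ne_zero [Nontrivial E]
    (gsym : ∀ u v, g u v = g v u)
    (gnd : ∀ u : E, (∀ v, g u v = 0) → u = 0) :
    ∃ u₀ : E, g u₀ u₀ ≠ 0 := by
  by_contra hall
  push_neg at hall
  obtain ⟨u, hu⟩ := exists_ne (0 : E)
  refine hu (gnd u fun v => ?_)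
  have h1 := hall (u + v)
  have h2 := hall u
  have h3 := hall v
  simp only [map_add, ContinuousLinearMap.add_apply] at h1
  have := gsym u v
  linarith

end Proportional


section Infra
variable {F : Type*} [NormedAddCommGroup F] [NormedSpace ℝ F]

theorem fderiv_eval {f : E → E →L[ℝ] F} {x : E} (hf : DifferentiableAt ℝ f x) (v u : E) :
    fderiv ℝ (fun y => f y v) x u = fderiv ℝ f x u v := by
  have h : (fun y => f y v) = fun y => (f y) ((fun _ => v) y) := rfl
  rw [h, fderiv_clm_apply hf (differentiableAt_const v)]
  simp

theorem fderiv_eval2 {G : E → E →L[ℝ] E →L[ℝ] F} {x : E} (hG : DifferentiableAt ℝ G x)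
    (v w u : E) : fderiv ℝ (fun y => G y v w) x u = fderiv ℝ G x u v w := by
  have h1 : DifferentiableAt ℝ (fun y => G y v) x := hG.clm_apply (differentiableAt_const v)
  rw [fderiv_eval h1 w u, fderiv_eval hG v u]

theorem fderiv_clm_apply' {c : E → E →L[ℝ] F} {A : E → E} {x : E}
    (hc : DifferentiableAt ℝ c x) (hA : DifferentiableAt ℝ A x) (u : E) :
    fderiv ℝ (fun y => c y (A y)) x u = c x (fderiv ℝ A x u) + fderiv ℝ c x u (A x) := by
  rw [fderiv_clm_apply hc hA]
  simp

theorem fderiv_comp_rel {A B : E → E →L[ℝ] E} {φ : E → E} {x v : E}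
    (hA : DifferentiableAt ℝ A x) (hB : DifferentiableAt ℝ B x)
    (hrel : (fun y => A y (B y v)) =ᶠ[𝓝 x] φ) (u : E) :
    fderiv ℝ A x u (B x v) + A x (fderiv ℝ B x u v) = fderiv ℝ φ x u := by
  rw [← hrel.fderiv_eq]
  have hBv : DifferentiableAt ℝ (fun y => B y v) x := hB.clm_apply (differentiableAt_const v)
  have h : (fun y => A y (B y v)) = fun y => (A y) ((fun z => B z v) y) := rfl
  rw [h, fderiv_clm_apply hA hBv]
  simp [fderiv_eval hB v u, add_comm]
end Infra

section Gamma

variable (I J K : E → E →L[ℝ] E)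

/-- The second-order part of the Obata connection formula. -/
def Bf : E → E →L[ℝ] E →L[ℝ] E := fun x =>
  (-(1/4 : ℝ)) • ((ContinuousLinearMap.compL ℝ E E E (I x)).comp (fderiv ℝ I x)
    + (ContinuousLinearMap.compL ℝ E E E (J x)).comp (fderiv ℝ J x)
    + (ContinuousLinearMap.compL ℝ E E E (K x)).comp (fderiv ℝ K x))

theorem Bf_apply (x u v : E) : Bf I J K x u v =
    (-(1/4 : ℝ)) • (I x (fderiv ℝ I x u v) + J x (fderiv ℝ J x u v)
      + K x (fderiv ℝ K x u v)) := by
  simp [Bf]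

def Cf : E → E →L[ℝ] E →L[ℝ] E := fun x =>
  ContinuousLinearMap.flip (Bf I J K x) - Bf I J K x

theorem Cf_apply (x u v : E) : Cf I J K x u v = Bf I J K x v u - Bf I J K x u v := by
  simp [Cf]

def Tf : E → E →L[ℝ] E →L[ℝ] E := fun x =>
  Cf I J K x + (1/2 : ℝ) • (
    (ContinuousLinearMap.compL ℝ E E E (J x)).comp ((Cf I J K x).comp (J x))
    + (ContinuousLinearMap.compL ℝ E E E (K x)).comp ((Cf I J K x).comp (K x))
    - ((ContinuousLinearMap.compL ℝ E E E).flip (J x)).comp ((Cf I J K x).comp (J x))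
    - (ContinuousLinearMap.compL ℝ E E E (I x)).comp
        (((ContinuousLinearMap.compL ℝ E E E).flip (J x)).comp ((Cf I J K x).comp (K x))))

theorem Tf_apply (x u v : E) : Tf I J K x u v =
    Cf I J K x u v + (1/2 : ℝ) • (J x (Cf I J K x (J x u) v) + K x (Cf I J K x (K x u) v)
      - Cf I J K x (J x u) (J x v) - I x (Cf I J K x (K x u) (J x v))) := by
  simp [Tf]

/-- Explicit formula for the Obata connection. -/
def Γf : E → E →L[ℝ] E →L[ℝ] E := fun x => Bf I J K x + Tf I J K x


variable {I J K}

theorem contDiffOn_Bf {U : Set E} (hU : IsOpen U)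
    (hI : ContDiffOn ℝ (⊤ : ℕ∞) I U) (hJ : ContDiffOn ℝ (⊤ : ℕ∞) J U)
    (hK : ContDiffOn ℝ (⊤ : ℕ∞) K U) : ContDiffOn ℝ (⊤ : ℕ∞) (Bf I J K) U := by
  have hDI : ContDiffOn ℝ (⊤ : ℕ∞) (fderiv ℝ I) U := hI.fderiv_of_isOpen hU (by simp)
  have hDJ : ContDiffOn ℝ (⊤ : ℕ∞) (fderiv ℝ J) U := hJ.fderiv_of_isOpen hU (by simp)
  have hDK : ContDiffOn ℝ (⊤ : ℕ∞) (fderiv ℝ K) U := hK.fderiv_of_isOpen hU (by simp)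
  have t1 : ContDiffOn ℝ (⊤ : ℕ∞)
      (fun x => (ContinuousLinearMap.compL ℝ E E E (I x)).comp (fderiv ℝ I x)) U :=
    ((ContinuousLinearMap.compL ℝ E E E).contDiff.comp_contDiffOn hI).clm_comp hDI
  have t2 : ContDiffOn ℝ (⊤ : ℕ∞)
      (fun x => (ContinuousLinearMap.compL ℝ E E E (J x)).comp (fderiv ℝ J x)) U :=
    ((ContinuousLinearMap.compL ℝ E E E).contDiff.comp_contDiffOn hJ).clm_comp hDJ
  have t3 : ContDiffOn ℝ (⊤ : ℕ∞)
      (fun x => (ContinuousLinearMap.compL ℝ E E E (K x)).comp (fderiv ℝ K x)) U :=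
    ((ContinuousLinearMap.compL ℝ E E E).contDiff.comp_contDiffOn hK).clm_comp hDK
  exact ((t1.add t2).add t3).const_smul _

theorem contDiffOn_Cf {U : Set E} (hU : IsOpen U)
    (hI : ContDiffOn ℝ (⊤ : ℕ∞) I U) (hJ : ContDiffOn ℝ (⊤ : ℕ∞) J U)
    (hK : ContDiffOn ℝ (⊤ : ℕ∞) K U) : ContDiffOn ℝ (⊤ : ℕ∞) (Cf I J K) U := by
  have hBf := contDiffOn_Bf hU hI hJ hK
  have hflip : ContDiffOn ℝ (⊤ : ℕ∞) (fun x => (Bf I J K x).flip) U := by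
    have : (fun x => (Bf I J K x).flip) = fun x =>
        (ContinuousLinearMap.flipₗᵢ ℝ E E E).toLinearIsometry.toContinuousLinearMap
          (Bf I J K x) := rfl
    rw [this]
    exact ((ContinuousLinearMap.flipₗᵢ ℝ E E
      E).toLinearIsometry.toContinuousLinearMap.contDiff).comp_contDiffOn hBf
  exact hflip.sub hBf

theorem contDiffOn_Tf {U : Set E} (hU : IsOpen U)
    (hI : ContDiffOn ℝ (⊤ : ℕ∞) I U) (hJ : ContDiffOn ℝ (⊤ : ℕ∞) J U)
    (hK : ContDiffOn ℝ (⊤ : ℕ∞) K U) : ContDiffOn ℝ (⊤ : ℕ∞) (Tf I J K) U := by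
  have hCf := contDiffOn_Cf hU hI hJ hK
  have hCJ : ContDiffOn ℝ (⊤ : ℕ∞) (fun x => (Cf I J K x).comp (J x)) U := hCf.clm_comp hJ
  have hCK : ContDiffOn ℝ (⊤ : ℕ∞) (fun x => (Cf I J K x).comp (K x)) U := hCf.clm_comp hK
  have tA : ContDiffOn ℝ (⊤ : ℕ∞)
      (fun x => (ContinuousLinearMap.compL ℝ E E E (J x)).comp ((Cf I J K x).comp (J x))) U :=
    ((ContinuousLinearMap.compL ℝ E E E).contDiff.comp_contDiffOn hJ).clm_comp hCJ
  have tB : ContDiffOn ℝ (⊤ : ℕ∞)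
      (fun x => (ContinuousLinearMap.compL ℝ E E E (K x)).comp ((Cf I J K x).comp (K x))) U :=
    ((ContinuousLinearMap.compL ℝ E E E).contDiff.comp_contDiffOn hK).clm_comp hCK
  have tC : ContDiffOn ℝ (⊤ : ℕ∞)
      (fun x => ((ContinuousLinearMap.compL ℝ E E E).flip (J x)).comp
        ((Cf I J K x).comp (J x))) U :=
    (((ContinuousLinearMap.compL ℝ E E E).flip).contDiff.comp_contDiffOn hJ).clm_comp hCJ
  have tD : ContDiffOn ℝ (⊤ : ℕ∞)
      (fun x => (ContinuousLinearMap.compL ℝ E E E (I x)).comp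
        (((ContinuousLinearMap.compL ℝ E E E).flip (J x)).comp ((Cf I J K x).comp (K x)))) U :=
    ((ContinuousLinearMap.compL ℝ E E E).contDiff.comp_contDiffOn hI).clm_comp
      ((((ContinuousLinearMap.compL ℝ E E E).flip).contDiff.comp_contDiffOn hJ).clm_comp hCK)
  exact hCf.add ((((tA.add tB).sub tC).sub tD).const_smul _)

theorem contDiffOn_Γf {U : Set E} (hU : IsOpen U)
    (hI : ContDiffOn ℝ (⊤ : ℕ∞) I U) (hJ : ContDiffOn ℝ (⊤ : ℕ∞) J U)
    (hK : ContDiffOn ℝ (⊤ : ℕ∞) K U) : ContDiffOn ℝ (⊤ : ℕ∞) (Γf I J K) U :=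
  (contDiffOn_Bf hU hI hJ hK).add (contDiffOn_Tf hU hI hJ hK)

end Gamma

-- ===== the identification ΓOb = Γf =====
section GammaEq

variable {U : Set E} {I J K : E → E →L[ℝ] E} {x : E}

theorem quatRel_of_hc (hhc : IsHypercomplexOn U I J K) (hx : x ∈ U) :
    QuatRel (I x) (J x) (K x) :=
  ⟨hhc.acsI.square x hx, hhc.acsJ.square x hx, hhc.acsK.square x hx,
    hhc.mulIJ x hx, hhc.mulJI x hx⟩

theorem diffAt_of_contDiffOn {f : E → E →L[ℝ] E} (hU : IsOpen U)
    (hf : ContDiffOn ℝ (⊤ : ℕ∞) f U) (hx : x ∈ U) : DifferentiableAt ℝ f x :=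
  ((hf.differentiableOn (by simp)).differentiableAt (hU.mem_nhds hx))

theorem gammaOb_eq (hU : IsOpen U) (hhc : IsHypercomplexOn U I J K)
    {Γo : E → E →L[ℝ] E →L[ℝ] E} (hOb : IsObataOn U I J K Γo) (hx : x ∈ U) :
    ∀ u v, Γo x u v = Γf I J K x u v := by
  have qx := quatRel_of_hc hhc hx
  have hId : DifferentiableAt ℝ I x := diffAt_of_contDiffOn hU hhc.acsI.smooth hx
  have hJd : DifferentiableAt ℝ J x := diffAt_of_contDiffOn hU hhc.acsJ.smooth hx
  have hKd : DifferentiableAt ℝ K x := diffAt_of_contDiffOn hU hhc.acsK.smooth hx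
  set DI := fderiv ℝ I x with hDI
  set DJ := fderiv ℝ J x with hDJ
  set DK := fderiv ℝ K x with hDK
  have hmem := hU.mem_nhds hx
  -- the nine derivative relations
  have relII : ∀ v u, DI u (I x v) + I x (DI u v) = 0 := by
    intro v u
    have hrel : (fun y => I y (I y v)) =ᶠ[𝓝 x] (fun _ => -v) :=
      Filter.eventuallyEq_of_mem hmem (fun y hy => hhc.acsI.square y hy v)
    have h := fderiv_comp_rel hId hId hrel u
    simpa using h
  have relJI : ∀ v u, DJ u (I x v) + J x (DI u v) = -(DK u v) := by
    intro v u
    have hrel : (fun y => J y (I y v)) =ᶠ[𝓝 x] (fun y => -(K y v)) :=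
      Filter.eventuallyEq_of_mem hmem (fun y hy => hhc.mulJI y hy v)
    have h := fderiv_comp_rel hJd hId hrel u
    rw [h, show (fun y => -(K y v)) = fun y => -((fun z => K z v) y) from rfl, fderiv_fun_neg]
    simp [fderiv_eval hKd v u, hDK]
  have relKI : ∀ v u, DK u (I x v) + K x (DI u v) = DJ u v := by
    intro v u
    have hrel : (fun y => K y (I y v)) =ᶠ[𝓝 x] (fun y => J y v) :=
      Filter.eventuallyEq_of_mem hmem (fun y hy => (quatRel_of_hc hhc hy).ki v)
    have h := fderiv_comp_rel hKd hId hrel u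
    rw [h, fderiv_eval hJd v u]
  have relIJ : ∀ v u, DI u (J x v) + I x (DJ u v) = DK u v := by
    intro v u
    have hrel : (fun y => I y (J y v)) =ᶠ[𝓝 x] (fun y => K y v) :=
      Filter.eventuallyEq_of_mem hmem (fun y hy => hhc.mulIJ y hy v)
    have h := fderiv_comp_rel hId hJd hrel u
    rw [h, fderiv_eval hKd v u]
  have relJJ : ∀ v u, DJ u (J x v) + J x (DJ u v) = 0 := by
    intro v u
    have hrel : (fun y => J y (J y v)) =ᶠ[𝓝 x] (fun _ => -v) :=
      Filter.eventuallyEq_of_mem hmem (fun y hy => hhc.acsJ.square y hy v)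
    have h := fderiv_comp_rel hJd hJd hrel u
    simpa using h
  have relKJ : ∀ v u, DK u (J x v) + K x (DJ u v) = -(DI u v) := by
    intro v u
    have hrel : (fun y => K y (J y v)) =ᶠ[𝓝 x] (fun y => -(I y v)) :=
      Filter.eventuallyEq_of_mem hmem (fun y hy => (quatRel_of_hc hhc hy).kj v)
    have h := fderiv_comp_rel hKd hJd hrel u
    rw [h, show (fun y => -(I y v)) = fun y => -((fun z => I z v) y) from rfl, fderiv_fun_neg]
    simp [fderiv_eval hId v u, hDI]
  have relIK : ∀ v u, DI u (K x v) + I x (DK u v) = -(DJ u v) := by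
    intro v u
    have hrel : (fun y => I y (K y v)) =ᶠ[𝓝 x] (fun y => -(J y v)) :=
      Filter.eventuallyEq_of_mem hmem (fun y hy => (quatRel_of_hc hhc hy).ik v)
    have h := fderiv_comp_rel hId hKd hrel u
    rw [h, show (fun y => -(J y v)) = fun y => -((fun z => J z v) y) from rfl, fderiv_fun_neg]
    simp [fderiv_eval hJd v u, hDJ]
  have relJK : ∀ v u, DJ u (K x v) + J x (DK u v) = DI u v := by
    intro v u
    have hrel : (fun y => J y (K y v)) =ᶠ[𝓝 x] (fun y => I y v) :=
      Filter.eventuallyEq_of_mem hmem (fun y hy => (quatRel_of_hc hhc hy).jk v)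
    have h := fderiv_comp_rel hJd hKd hrel u
    rw [h, fderiv_eval hId v u]
  have relKK : ∀ v u, DK u (K x v) + K x (DK u v) = 0 := by
    intro v u
    have hrel : (fun y => K y (K y v)) =ᶠ[𝓝 x] (fun _ => -v) :=
      Filter.eventuallyEq_of_mem hmem (fun y hy => hhc.acsK.square y hy v)
    have h := fderiv_comp_rel hKd hKd hrel u
    simpa using h
  -- T := Γo - Bf commutes with I, J, K in the second argument
  set T : E → E → E := fun u v => Γo x u v - Bf I J K x u v with hT
  have hTI : ∀ u v, T u (I x v) = I x (T u v) := by
    intro u v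
    have pI := hOb.parI x hx u v
    rw [fderiv_eval hId v u] at pI
    have e1 : DI u (I x v) = -(I x (DI u v)) := eq_neg_of_add_eq_zero_left (relII v u)
    have e2 : DJ u (I x v) = -(DK u v) - J x (DI u v) := eq_sub_of_add_eq (relJI v u)
    have e3 : DK u (I x v) = DJ u v - K x (DI u v) := eq_sub_of_add_eq (relKI v u)
    have e4 : Γo x u (I x v) = I x (Γo x u v) - DI u v := by rw [← pI]; abel
    have key : Bf I J K x u (I x v) - I x (Bf I J K x u v) = -(DI u v) := by
      rw [Bf_apply, Bf_apply, ← hDI, ← hDJ, ← hDK, e1, e2, e3]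
      simp only [map_add, map_sub, map_neg, map_smul, qx.i2, qx.j2, qx.k2, qx.ij, qx.ji, qx.ik, qx.ki, qx.jk, qx.kj]
      module
    simp only [hT, map_sub]
    rw [e4]
    linear_combination (norm := module) (-1 : ℝ) • key
  have hTJ : ∀ u v, T u (J x v) = J x (T u v) := by
    intro u v
    have pJ := hOb.parJ x hx u v
    rw [fderiv_eval hJd v u] at pJ
    have e1 : DI u (J x v) = DK u v - I x (DJ u v) := eq_sub_of_add_eq (relIJ v u)
    have e2 : DJ u (J x v) = -(J x (DJ u v)) := eq_neg_of_add_eq_zero_left (relJJ v u)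
    have e3 : DK u (J x v) = -(DI u v) - K x (DJ u v) := eq_sub_of_add_eq (relKJ v u)
    have e4 : Γo x u (J x v) = J x (Γo x u v) - DJ u v := by rw [← pJ]; abel
    simp only [hT, Bf_apply, ← hDI, ← hDJ, ← hDK, e1, e2, e3, e4, map_add, map_sub, map_neg,
      map_smul, qx.i2, qx.j2, qx.k2, qx.ij, qx.ji, qx.ik, qx.ki, qx.jk, qx.kj]
    module
  have hTK : ∀ u v, T u (K x v) = K x (T u v) := by
    intro u v
    have pK := hOb.parK x hx u v
    rw [fderiv_eval hKd v u] at pK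
    have e1 : DI u (K x v) = -(DJ u v) - I x (DK u v) := eq_sub_of_add_eq (relIK v u)
    have e2 : DJ u (K x v) = DI u v - J x (DK u v) := eq_sub_of_add_eq (relJK v u)
    have e3 : DK u (K x v) = -(K x (DK u v)) := eq_neg_of_add_eq_zero_left (relKK v u)
    have e4 : Γo x u (K x v) = K x (Γo x u v) - DK u v := by rw [← pK]; abel
    simp only [hT, Bf_apply, ← hDI, ← hDJ, ← hDK, e1, e2, e3, e4, map_add, map_sub, map_neg,
      map_smul, qx.i2, qx.j2, qx.k2, qx.ij, qx.ji, qx.ik, qx.ki, qx.jk, qx.kj]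
    module
  have hCsym : ∀ u v, T u v - T v u = Cf I J K x u v := by
    intro u v
    simp only [hT, Cf_apply, hOb.torsionFree x hx u v]
    abel
  have EI : ∀ u v, T (I x u) (I x v)
      = -(T u v) + Cf I J K x u v + I x (Cf I J K x (I x u) v) := by
    intro u v
    have a1 : T (I x u) (I x v) = I x (T (I x u) v) := hTI (I x u) v
    have a2 : T (I x u) v = T v (I x u) + Cf I J K x (I x u) v := by
      have := hCsym (I x u) v; linear_combination (norm := module) this
    have a3 : T v (I x u) = I x (T v u) := hTI v u
    have a4 : T v u = T u v - Cf I J K x u v := by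
      have := hCsym u v; linear_combination (norm := module) -this
    simp only [a1, a2, a3, a4, map_add, map_sub, map_neg, qx.i2]
    module
  have EJ : ∀ u v, T (J x u) (J x v)
      = -(T u v) + Cf I J K x u v + J x (Cf I J K x (J x u) v) := by
    intro u v
    have a1 : T (J x u) (J x v) = J x (T (J x u) v) := hTJ (J x u) v
    have a2 : T (J x u) v = T v (J x u) + Cf I J K x (J x u) v := by
      have := hCsym (J x u) v; linear_combination (norm := module) this
    have a3 : T v (J x u) = J x (T v u) := hTJ v u
    have a4 : T v u = T u v - Cf I J K x u v := by
      have := hCsym u v; linear_combination (norm := module) -this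
    simp only [a1, a2, a3, a4, map_add, map_sub, map_neg, qx.j2]
    module
  have EK : ∀ u v, T (K x u) (K x v)
      = -(T u v) + Cf I J K x u v + K x (Cf I J K x (K x u) v) := by
    intro u v
    have a1 : T (K x u) (K x v) = K x (T (K x u) v) := hTK (K x u) v
    have a2 : T (K x u) v = T v (K x u) + Cf I J K x (K x u) v := by
      have := hCsym (K x u) v; linear_combination (norm := module) this
    have a3 : T v (K x u) = K x (T v u) := hTK v u
    have a4 : T v u = T u v - Cf I J K x u v := by
      have := hCsym u v; linear_combination (norm := module) -this
    simp only [a1, a2, a3, a4, map_add, map_sub, map_neg, qx.k2]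
    module
  intro u v
  have h1 := EI (J x u) (J x v)
  rw [qx.ij u, qx.ij v] at h1
  have h2 := EK u v
  have h3 := EJ u v
  -- solve for T u v
  have h4 : T u v = Cf I J K x u v + (1/2 : ℝ) • (J x (Cf I J K x (J x u) v)
      + K x (Cf I J K x (K x u) v) - Cf I J K x (J x u) (J x v)
      - I x (Cf I J K x (K x u) (J x v))) := by
    linear_combination (norm := module) ((1/2 : ℝ) • h2) - ((1/2 : ℝ) • h1)
      + ((1/2 : ℝ) • h3)
  have hfin : Γo x u v = Bf I J K x u v + T u v := by simp [hT]
  rw [hfin, h4, Γf]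
  simp only [ContinuousLinearMap.add_apply, Tf_apply]

end GammaEq

section Metric

variable {U : Set E} {g : E → E →ₗ[ℝ] E →ₗ[ℝ] ℝ}

variable (g) in
/-- The metric as a continuous-bilinear-map-valued function. -/
def Gc : E → E →L[ℝ] E →L[ℝ] ℝ := fun x =>
  LinearMap.toContinuousLinearMap
    ((LinearMap.toContinuousLinearMap (𝕜 := ℝ) (E := E) (F' := ℝ)).toLinearMap.comp (g x))

@[simp] theorem Gc_apply (x u v : E) : Gc g x u v = g x u v := rfl

theorem contDiffOn_Gc (hg : ∀ u v : E, ContDiffOn ℝ (⊤ : ℕ∞) (fun x => g x u v) U) :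
    ContDiffOn ℝ (⊤ : ℕ∞) (Gc g) U := by
  rw [contDiffOn_clm_apply]
  intro u
  rw [contDiffOn_clm_apply]
  intro v
  exact hg u v

variable (g) in
/-- The covariant derivative `∇_u g` of the metric, as a bilinear form. -/
def nablaG (Γo : E → E →L[ℝ] E →L[ℝ] E) : E → E → E →L[ℝ] E →L[ℝ] ℝ := fun x u =>
  fderiv ℝ (Gc g) x u - (Gc g x).comp (Γo x u)
    - ((ContinuousLinearMap.compL ℝ E E ℝ).flip (Γo x u)).comp (Gc g x)

theorem nablaG_apply (Γo : E → E →L[ℝ] E →L[ℝ] E) (x u v w : E) :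
    nablaG g Γo x u v w
      = fderiv ℝ (Gc g) x u v w - g x (Γo x u v) w - g x v (Γo x u w) := by
  simp [nablaG]

theorem fderiv_g_eq {x : E} (hGd : DifferentiableAt ℝ (Gc g) x) (v w u : E) :
    fderiv ℝ (fun y => g y v w) x u = fderiv ℝ (Gc g) x u v w := by
  have h : (fun y => g y v w) = fun y => Gc g y v w := rfl
  rw [h, fderiv_eval2 hGd]

/-- Key product rule: derivative of `g(Av, Aw)` versus `g(v,w)`. -/
theorem nablaG_herm {A : E → E →L[ℝ] E} {Γo : E → E →L[ℝ] E →L[ℝ] E} {x : E}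
    (hU : IsOpen U) (hx : x ∈ U)
    (hGd : DifferentiableAt ℝ (Gc g) x) (hAd : DifferentiableAt ℝ A x)
    (hherm : ∀ y ∈ U, ∀ v w, g y (A y v) (A y w) = g y v w)
    (hpar : ∀ u v, fderiv ℝ (fun y => A y v) x u + Γo x u (A x v) = A x (Γo x u v))
    (u v w : E) : nablaG g Γo x u (A x v) (A x w) = nablaG g Γo x u v w := by
  have hhermx := hherm x hx
  set DG := fderiv ℝ (Gc g) x with hDG
  set DA := fderiv ℝ A x with hDA
  have hAv : DifferentiableAt ℝ (fun y => A y v) x := hAd.clm_apply (differentiableAt_const v)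
  have hAw : DifferentiableAt ℝ (fun y => A y w) x := hAd.clm_apply (differentiableAt_const w)
  have hc : DifferentiableAt ℝ (fun y => Gc g y (A y v)) x := hGd.clm_apply hAv
  have h1 : fderiv ℝ (fun y => Gc g y (A y v) (A y w)) x u = DG u v w := by
    have heq : (fun y => Gc g y (A y v) (A y w)) =ᶠ[𝓝 x] (fun y => Gc g y v w) :=
      Filter.eventuallyEq_of_mem (hU.mem_nhds hx)
        (fun y hy => by simp [hherm y hy v w])
    rw [heq.fderiv_eq, fderiv_eval2 hGd]
  have h3 : fderiv ℝ (fun y => Gc g y (A y v)) x u = Gc g x (DA u v) + DG u (A x v) := by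
    have h := fderiv_clm_apply' (c := Gc g) (A := fun y => A y v) hGd hAv u
    rw [h, fderiv_eval hAd v u]
  have h2 : fderiv ℝ (fun y => Gc g y (A y v) (A y w)) x u
      = Gc g x (A x v) (DA u w) + (Gc g x (DA u v) + DG u (A x v)) (A x w) := by
    have h := fderiv_clm_apply' (c := fun y => Gc g y (A y v)) (A := fun y => A y w) hc hAw u
    rw [h, fderiv_eval hAd w u, h3]
  have key : DG u (A x v) (A x w)
      = DG u v w - g x (A x v) (DA u w) - g x (DA u v) (A x w) := by
    have h4 := h1.symm.trans h2
    simp only [ContinuousLinearMap.add_apply, Gc_apply] at h4 ⊢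
    linarith
  have epv : Γo x u (A x v) = A x (Γo x u v) - DA u v := by
    have h := hpar u v
    rw [fderiv_eval hAd v u] at h
    rw [← h]; abel
  have epw : Γo x u (A x w) = A x (Γo x u w) - DA u w := by
    have h := hpar u w
    rw [fderiv_eval hAd w u] at h
    rw [← h]; abel
  rw [nablaG_apply, nablaG_apply, epv, epw]
  simp only [map_sub, LinearMap.sub_apply]
  rw [key]
  have e5 := hhermx (Γo x u v) w
  have e6 := hhermx v (Γo x u w)
  linarith

/-- First derivative of the Kähler form of a parallel hermitian structure. -/
theorem dF_term {A : E → E →L[ℝ] E} {Γo : E → E →L[ℝ] E →L[ℝ] E} {x : E} {ωf : E → ℝ}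
    (hGd : DifferentiableAt ℝ (Gc g) x) (hAd : DifferentiableAt ℝ A x)
    (hω : ∀ u v w, nablaG g Γo x u v w = ωf u * g x v w)
    (hpar : ∀ u v, fderiv ℝ (fun y => A y v) x u + Γo x u (A x v) = A x (Γo x u v))
    (u v w : E) : fderiv ℝ (fun y => kaehlerForm A g y v w) x u
      = ωf u * g x (A x v) w + g x (A x (Γo x u v)) w + g x (A x v) (Γo x u w) := by
  set DG := fderiv ℝ (Gc g) x with hDG
  set DA := fderiv ℝ A x with hDA
  have hAv : DifferentiableAt ℝ (fun y => A y v) x := hAd.clm_apply (differentiableAt_const v)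
  have hc : DifferentiableAt ℝ (fun y => Gc g y (A y v)) x := hGd.clm_apply hAv
  have h3 : fderiv ℝ (fun y => Gc g y (A y v)) x u = Gc g x (DA u v) + DG u (A x v) := by
    have h := fderiv_clm_apply' (c := Gc g) (A := fun y => A y v) hGd hAv u
    rw [h, fderiv_eval hAd v u]
  have h5 : fderiv ℝ (fun y => kaehlerForm A g y v w) x u
      = g x (DA u v) w + DG u (A x v) w := by
    have hfun : (fun y => kaehlerForm A g y v w) = fun y => (fun z => Gc g z (A z v)) y w := rfl
    rw [hfun, fderiv_eval hc w u, h3]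
    simp
  have h6 : DG u (A x v) w = nablaG g Γo x u (A x v) w
      + g x (Γo x u (A x v)) w + g x (A x v) (Γo x u w) := by
    rw [nablaG_apply]; ring
  have epv : Γo x u (A x v) = A x (Γo x u v) - DA u v := by
    have h := hpar u v
    rw [fderiv_eval hAd v u] at h
    rw [← h]; abel
  rw [h5, h6, hω, epv]
  simp only [map_sub, LinearMap.sub_apply]
  ring

theorem skew_of_herm {A : E →L[ℝ] E} {gx : E →ₗ[ℝ] E →ₗ[ℝ] ℝ}
    (hsym : ∀ v w, gx v w = gx w v)
    (hherm : ∀ v w, gx (A v) (A w) = gx v w)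
    (hsq : ∀ v, A (A v) = -v) (a b : E) : gx (A a) b = -(gx a (A b)) := by
  have h1 : gx (A a) (A (A b)) = gx a (A b) := hherm a (A b)
  rw [hsq] at h1
  simp only [map_neg] at h1
  linarith

/-- The `dF = ω ∧ F` computation for one parallel hermitian structure. -/
theorem dF_eq {A : E → E →L[ℝ] E} {Γo : E → E →L[ℝ] E →L[ℝ] E} {x : E} {ωf : E → ℝ}
    (hGd : DifferentiableAt ℝ (Gc g) x) (hAd : DifferentiableAt ℝ A x)
    (hω : ∀ u v w, nablaG g Γo x u v w = ωf u * g x v w)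
    (hpar : ∀ u v, fderiv ℝ (fun y => A y v) x u + Γo x u (A x v) = A x (Γo x u v))
    (htf : ∀ u v, Γo x u v = Γo x v u)
    (hsymx : ∀ v w, g x v w = g x w v)
    (hhermx : ∀ v w, g x (A x v) (A x w) = g x v w)
    (hsq : ∀ v, A x (A x v) = -v)
    (u v w : E) : d2 (kaehlerForm A g) x u v w
      = ωf u * kaehlerForm A g x v w - ωf v * kaehlerForm A g x u w
        + ωf w * kaehlerForm A g x u v := by
  have t1 := dF_term hGd hAd hω hpar u v w
  have t2 := dF_term hGd hAd hω hpar v u w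
  have t3 := dF_term hGd hAd hω hpar w u v
  rw [d2, t1, t2, t3]
  have skew := skew_of_herm (A := A x) (gx := g x) hsymx hhermx hsq
  have c1 : g x (A x (Γo x v u)) w = g x (A x (Γo x u v)) w := by rw [← htf u v]
  have c2 : g x (A x u) (Γo x w v) = g x (A x u) (Γo x v w) := by rw [← htf v w]
  have c3 : g x (A x (Γo x w u)) v = -(g x (A x v) (Γo x u w)) := by
    rw [← htf u w, skew (Γo x u w) v, hsymx (Γo x u w) (A x v)]
  rw [c1, c2, c3]
  simp only [kaehlerForm]
  ring


variable (g) in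
/-- `∇g` paired with fixed vectors, as a linear form in the direction. -/
def nablaLin (Γo : E → E →L[ℝ] E →L[ℝ] E) (x a b : E) : E →ₗ[ℝ] ℝ where
  toFun := fun u => nablaG g Γo x u a b
  map_add' := fun p q => by
    simp only [nablaG_apply, map_add, ContinuousLinearMap.add_apply, LinearMap.add_apply]
    ring
  map_smul' := fun c p => by
    simp only [nablaG_apply, map_smul, ContinuousLinearMap.smul_apply, LinearMap.smul_apply,
      RingHom.id_apply, smul_eq_mul]
    ring

end Metric

section Curvature

variable {U : Set E} {Γo Γs : E → E →L[ℝ] E →L[ℝ] E} {x : E}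

theorem curv_antisym (Γ : E → E →L[ℝ] E →L[ℝ] E) (x u v w : E) :
    curv Γ x u v w = -(curv Γ x v u w) := by
  simp only [curv]
  abel

/-- curvature via a differentiable representative of `Γo`. -/
theorem curv_eq (hU : IsOpen U) (hx : x ∈ U)
    (hΓs : ∀ y ∈ U, ∀ a b, Γo y a b = Γs y a b) (hΓsd : DifferentiableAt ℝ Γs x)
    (u v w : E) :
    curv Γo x u v w = fderiv ℝ Γs x u v w - fderiv ℝ Γs x v u w
      + Γo x u (Γo x v w) - Γo x v (Γo x u w) := by
  have h1 : (fun y => Γo y v w) =ᶠ[𝓝 x] (fun y => Γs y v w) :=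
    Filter.eventuallyEq_of_mem (hU.mem_nhds hx) (fun y hy => hΓs y hy v w)
  have h2 : (fun y => Γo y u w) =ᶠ[𝓝 x] (fun y => Γs y u w) :=
    Filter.eventuallyEq_of_mem (hU.mem_nhds hx) (fun y hy => hΓs y hy u w)
  rw [curv, h1.fderiv_eq, h2.fderiv_eq, fderiv_eval2 hΓsd, fderiv_eval2 hΓsd]

theorem fderiv_Γs_symm (hU : IsOpen U) (hx : x ∈ U)
    (hΓs : ∀ y ∈ U, ∀ a b, Γo y a b = Γs y a b) (hΓsd : DifferentiableAt ℝ Γs x)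
    (htf : ∀ y ∈ U, ∀ a b, Γo y a b = Γo y b a)
    (u v w : E) : fderiv ℝ Γs x u v w = fderiv ℝ Γs x u w v := by
  have h1 : (fun y => Γs y v w) =ᶠ[𝓝 x] (fun y => Γs y w v) :=
    Filter.eventuallyEq_of_mem (hU.mem_nhds hx) (fun y hy => by
      rw [← hΓs y hy v w, ← hΓs y hy w v, htf y hy v w])
  rw [← fderiv_eval2 hΓsd v w u, ← fderiv_eval2 hΓsd w v u, h1.fderiv_eq]

theorem curv_bianchi (hU : IsOpen U) (hx : x ∈ U)
    (hΓs : ∀ y ∈ U, ∀ a b, Γo y a b = Γs y a b) (hΓsd : DifferentiableAt ℝ Γs x)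
    (htf : ∀ y ∈ U, ∀ a b, Γo y a b = Γo y b a)
    (u v w : E) : curv Γo x u v w + curv Γo x v w u + curv Γo x w u v = 0 := by
  rw [curv_eq hU hx hΓs hΓsd u v w, curv_eq hU hx hΓs hΓsd v w u, curv_eq hU hx hΓs hΓsd w u v]
  have s1 : fderiv ℝ Γs x v w u = fderiv ℝ Γs x v u w := fderiv_Γs_symm hU hx hΓs hΓsd htf v w u
  have s2 : fderiv ℝ Γs x w v u = fderiv ℝ Γs x w u v := fderiv_Γs_symm hU hx hΓs hΓsd htf w v u
  have s3 : fderiv ℝ Γs x u w v = fderiv ℝ Γs x u v w := fderiv_Γs_symm hU hx hΓs hΓsd htf u w v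
  have p1 : Γo x w u = Γo x u w := htf x hx w u
  have p2 : Γo x v u = Γo x u v := htf x hx v u
  have p3 : Γo x w v = Γo x v w := htf x hx w v
  rw [s1, s2, s3, p1, p2, p3]
  abel

/-- The curvature commutes with a parallel a.c.s. -/
theorem curv_commute {A : E → E →L[ℝ] E} (hU : IsOpen U) (hx : x ∈ U)
    (hΓs : ∀ y ∈ U, ∀ a b, Γo y a b = Γs y a b) (hΓsd : DifferentiableAt ℝ Γs x)
    (hAd : ∀ y ∈ U, DifferentiableAt ℝ A y) (hDAd : DifferentiableAt ℝ (fderiv ℝ A) x)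
    (hpar : ∀ y ∈ U, ∀ u v, fderiv ℝ (fun z => A z v) y u + Γo y u (A y v) = A y (Γo y u v))
    (u v w : E) : curv Γo x u v (A x w) = A x (curv Γo x u v w) := by
  have hmem := hU.mem_nhds hx
  have hAdx : DifferentiableAt ℝ A x := hAd x hx
  set DA := fderiv ℝ A x with hDA
  set D2A := fderiv ℝ (fderiv ℝ A) x with hD2A
  set DΓ := fderiv ℝ Γs x with hDΓ
  -- the differentiated parallelism identity
  have star : ∀ b a, D2A b a w + Γo x a (DA b w) + DΓ b a (A x w)
      = A x (DΓ b a w) + DA b (Γo x a w) := by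
    intro b a
    -- f1 + f2 = f3 on U
    have hf1diff : DifferentiableAt ℝ (fun y => fderiv ℝ A y a w) x :=
      (hDAd.clm_apply (differentiableAt_const a)).clm_apply (differentiableAt_const w)
    have hf1eq : (fun y => fderiv ℝ (fun z => A z w) y a) =ᶠ[𝓝 x]
        (fun y => fderiv ℝ A y a w) :=
      Filter.eventuallyEq_of_mem hmem (fun y hy => fderiv_eval (hAd y hy) w a)
    have hf1 : fderiv ℝ (fun y => fderiv ℝ (fun z => A z w) y a) x b = D2A b a w := by
      rw [hf1eq.fderiv_eq, fderiv_eval2 hDAd]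
    have hf2eq : (fun y => Γo y a (A y w)) =ᶠ[𝓝 x] (fun y => Γs y a (A y w)) :=
      Filter.eventuallyEq_of_mem hmem (fun y hy => by rw [hΓs y hy])
    have hcs : DifferentiableAt ℝ (fun y => Γs y a) x :=
      hΓsd.clm_apply (differentiableAt_const a)
    have hAw : DifferentiableAt ℝ (fun y => A y w) x :=
      hAdx.clm_apply (differentiableAt_const w)
    have hf2 : fderiv ℝ (fun y => Γo y a (A y w)) x b
        = Γo x a (DA b w) + DΓ b a (A x w) := by
      rw [hf2eq.fderiv_eq]
      have h := fderiv_clm_apply' (c := fun y => Γs y a) (A := fun y => A y w) hcs hAw b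
      rw [h, fderiv_eval hAdx w b, fderiv_eval hΓsd a b, hΓs x hx]
    have hf3eq : (fun y => A y (Γo y a w)) =ᶠ[𝓝 x] (fun y => A y (Γs y a w)) :=
      Filter.eventuallyEq_of_mem hmem (fun y hy => by rw [hΓs y hy])
    have hΓsaw : DifferentiableAt ℝ (fun y => Γs y a w) x :=
      (hΓsd.clm_apply (differentiableAt_const a)).clm_apply (differentiableAt_const w)
    have hf3 : fderiv ℝ (fun y => A y (Γo y a w)) x b
        = A x (DΓ b a w) + DA b (Γo x a w) := by
      rw [hf3eq.fderiv_eq]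
      have h := fderiv_clm_apply' (c := A) (A := fun y => Γs y a w) hAdx hΓsaw b
      rw [h, fderiv_eval2 hΓsd a w b, hΓs x hx]
    -- combine
    have hsum : (fun y => fderiv ℝ (fun z => A z w) y a + Γo y a (A y w)) =ᶠ[𝓝 x]
        (fun y => A y (Γo y a w)) :=
      Filter.eventuallyEq_of_mem hmem (fun y hy => hpar y hy a w)
    have hf1d : DifferentiableAt ℝ (fun y => fderiv ℝ (fun z => A z w) y a) x :=
      hf1eq.differentiableAt_iff.mpr hf1diff
    have hf2d : DifferentiableAt ℝ (fun y => Γo y a (A y w)) x := by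
      rw [hf2eq.differentiableAt_iff]
      exact hcs.clm_apply hAw
    have hfd : fderiv ℝ (fun y => fderiv ℝ (fun z => A z w) y a + Γo y a (A y w)) x b
        = fderiv ℝ (fun y => A y (Γo y a w)) x b := by rw [hsum.fderiv_eq]
    rw [fderiv_fun_add hf1d hf2d] at hfd
    simp only [ContinuousLinearMap.add_apply] at hfd
    rw [hf1, hf2] at hfd
    rw [hf3] at hfd
    linear_combination (norm := module) hfd
  have hEv : ∀ᶠ y in 𝓝 x, HasFDerivAt A (fderiv ℝ A y) y :=
    Filter.eventually_of_mem hmem (fun y hy => (hAd y hy).hasFDerivAt)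
  have hsymw : D2A u v w = D2A v u w := by
    rw [second_derivative_symmetric_of_eventually hEv hDAd.hasFDerivAt u v]
  have s1 := star u v
  have s2 := star v u
  have epvw : Γo x v (A x w) = A x (Γo x v w) - DA v w := by
    have h := hpar x hx v w
    rw [fderiv_eval hAdx w v] at h
    rw [← h]; abel
  have epuw : Γo x u (A x w) = A x (Γo x u w) - DA u w := by
    have h := hpar x hx u w
    rw [fderiv_eval hAdx w u] at h
    rw [← h]; abel
  have q1 : Γo x u (Γo x v (A x w))
      = A x (Γo x u (Γo x v w)) - DA u (Γo x v w) - Γo x u (DA v w) := by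
    rw [epvw, map_sub]
    have h := hpar x hx u (Γo x v w)
    rw [fderiv_eval hAdx (Γo x v w) u] at h
    linear_combination (norm := module) h
  have q2 : Γo x v (Γo x u (A x w))
      = A x (Γo x v (Γo x u w)) - DA v (Γo x u w) - Γo x v (DA u w) := by
    rw [epuw, map_sub]
    have h := hpar x hx v (Γo x u w)
    rw [fderiv_eval hAdx (Γo x u w) v] at h
    linear_combination (norm := module) h
  rw [curv_eq hU hx hΓs hΓsd u v (A x w), curv_eq hU hx hΓs hΓsd u v w]
  simp only [map_sub, map_add]
  linear_combination (norm := module) s1 - s2 + q1 - q2 - hsymw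

variable (Γo Γs) in
/-- The curvature `R(·,v)w` as a linear map in the first slot (via the smooth
representative `Γs`). -/
def curvMap (x v w : E) : E →ₗ[ℝ] E where
  toFun := fun u => fderiv ℝ Γs x u v w - fderiv ℝ Γs x v u w
    + Γo x u (Γo x v w) - Γo x v (Γo x u w)
  map_add' := fun a b => by
    simp only [map_add, ContinuousLinearMap.add_apply]
    abel
  map_smul' := fun c a => by
    simp only [map_smul, ContinuousLinearMap.smul_apply, RingHom.id_apply]
    module

variable (Γo Γs) in
/-- The curvature endomorphism `R(v,w)` (via the smooth representative `Γs`). -/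
def curvEnd (x v w : E) : E →ₗ[ℝ] E where
  toFun := fun z => fderiv ℝ Γs x v w z - fderiv ℝ Γs x w v z
    + Γo x v (Γo x w z) - Γo x w (Γo x v z)
  map_add' := fun a b => by
    simp only [map_add, ContinuousLinearMap.add_apply]
    abel
  map_smul' := fun c a => by
    simp only [map_smul, ContinuousLinearMap.smul_apply, RingHom.id_apply]
    module

theorem curvMap_apply (hU : IsOpen U) (hx : x ∈ U)
    (hΓs : ∀ y ∈ U, ∀ a b, Γo y a b = Γs y a b) (hΓsd : DifferentiableAt ℝ Γs x)
    (v w u : E) : curvMap Γo Γs x v w u = curv Γo x u v w := by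
  rw [curv_eq hU hx hΓs hΓsd u v w]; rfl

theorem curvEnd_apply (hU : IsOpen U) (hx : x ∈ U)
    (hΓs : ∀ y ∈ U, ∀ a b, Γo y a b = Γs y a b) (hΓsd : DifferentiableAt ℝ Γs x)
    (v w z : E) : curvEnd Γo Γs x v w z = curv Γo x v w z := by
  rw [curv_eq hU hx hΓs hΓsd v w z]; rfl

theorem ricci_eq_trace (hU : IsOpen U) (hx : x ∈ U)
    (hΓs : ∀ y ∈ U, ∀ a b, Γo y a b = Γs y a b) (hΓsd : DifferentiableAt ℝ Γs x)
    (b : Module.Basis (Fin 4) ℝ E) (v w : E) :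
    ricci Γo b x v w = LinearMap.trace ℝ E (curvMap Γo Γs x v w) := by
  rw [LinearMap.trace_eq_matrix_trace ℝ b, Matrix.trace]
  simp only [Matrix.diag_apply, LinearMap.toMatrix_apply]
  rw [ricci]
  congr 1
  funext i
  rw [curvMap_apply hU hx hΓs hΓsd]

/-- Trace of `L ∘ A` vanishes when `A` commutes with a conjugating `J`. -/
theorem trace_comp_zero (Ll Jl : E →ₗ[ℝ] E) (A : E →ₗ[ℝ] E)
    (hJ2 : ∀ z, Jl (Jl z) = -z) (hJLJ : ∀ z, Jl (Ll (Jl z)) = Ll z)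
    (hcomm : ∀ z, A (Jl z) = Jl (A z)) : LinearMap.trace ℝ E (Ll ∘ₗ A) = 0 := by
  have h1 : Jl ∘ₗ ((Ll ∘ₗ A) ∘ₗ Jl) = Ll ∘ₗ A := by
    ext z
    simp only [LinearMap.comp_apply]
    rw [hcomm z, hJLJ (A z)]
  have h2 : LinearMap.trace ℝ E (Jl ∘ₗ ((Ll ∘ₗ A) ∘ₗ Jl))
      = LinearMap.trace ℝ E (((Ll ∘ₗ A) ∘ₗ Jl) ∘ₗ Jl) :=
    LinearMap.trace_comp_comm' _ _
  have h3 : ((Ll ∘ₗ A) ∘ₗ Jl) ∘ₗ Jl = -(Ll ∘ₗ A) := by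
    ext z
    simp only [LinearMap.comp_apply, LinearMap.neg_apply, hJ2, map_neg]
  rw [h1, h3] at h2
  rw [map_neg] at h2
  linarith

theorem ricci_star {A B : E → E →L[ℝ] E}
    (hU : IsOpen U) (hx : x ∈ U)
    (hΓs : ∀ y ∈ U, ∀ a b, Γo y a b = Γs y a b) (hΓsd : DifferentiableAt ℝ Γs x)
    (htf : ∀ y ∈ U, ∀ a b, Γo y a b = Γo y b a)
    (hA2 : ∀ z, A x (A x z) = -z) (hB2 : ∀ z, B x (B x z) = -z)
    (hBAB : ∀ z, B x (A x (B x z)) = A x z)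
    (hcA : ∀ u v w, curv Γo x u v (A x w) = A x (curv Γo x u v w))
    (hcB : ∀ u v w, curv Γo x u v (B x w) = B x (curv Γo x u v w))
    (v w : E) :
    LinearMap.trace ℝ E (curvMap Γo Γs x (A x v) (A x w))
      = -(LinearMap.trace ℝ E (curvMap Γo Γs x w v)) := by
  have ext1 : curvMap Γo Γs x (A x v) (A x w)
      = -((A x : E →ₗ[ℝ] E) ∘ₗ curvEnd Γo Γs x (A x v) w) - curvMap Γo Γs x w v := by
    ext u
    simp only [LinearMap.sub_apply, LinearMap.neg_apply, LinearMap.comp_apply,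
      ContinuousLinearMap.coe_coe]
    rw [curvMap_apply hU hx hΓs hΓsd, curvMap_apply hU hx hΓs hΓsd,
      curvEnd_apply hU hx hΓs hΓsd]
    have b1 : curv Γo x u (A x v) w
        = -(curv Γo x (A x v) w u) - curv Γo x w u (A x v) := by
      have h := curv_bianchi hU hx hΓs hΓsd htf u (A x v) w
      linear_combination (norm := module) h
    have c1 : curv Γo x u (A x v) (A x w) = A x (curv Γo x u (A x v) w) := hcA u (A x v) w
    have c2 : curv Γo x w u (A x v) = A x (curv Γo x w u v) := hcA w u v
    have c3 : curv Γo x w u v = -(curv Γo x u w v) := curv_antisym Γo x w u v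
    rw [c1, b1, map_sub, map_neg, c2, hA2, c3]
    abel
  rw [ext1, map_sub, map_neg]
  have hzero : LinearMap.trace ℝ E ((A x : E →ₗ[ℝ] E) ∘ₗ curvEnd Γo Γs x (A x v) w) = 0 := by
    refine trace_comp_zero _ (B x : E →ₗ[ℝ] E) _ (fun z => hB2 z) (fun z => hBAB z)
      (fun z => ?_)
    simp only [ContinuousLinearMap.coe_coe]
    rw [curvEnd_apply hU hx hΓs hΓsd, curvEnd_apply hU hx hΓs hΓsd, hcB]
  rw [hzero]
  ring

theorem ricci_antisym {I J K : E → E →L[ℝ] E}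
    (hU : IsOpen U) (hx : x ∈ U)
    (hΓs : ∀ y ∈ U, ∀ a b, Γo y a b = Γs y a b) (hΓsd : DifferentiableAt ℝ Γs x)
    (htf : ∀ y ∈ U, ∀ a b, Γo y a b = Γo y b a)
    (qx : QuatRel (I x) (J x) (K x))
    (hcI : ∀ u v w, curv Γo x u v (I x w) = I x (curv Γo x u v w))
    (hcJ : ∀ u v w, curv Γo x u v (J x w) = J x (curv Γo x u v w))
    (hcK : ∀ u v w, curv Γo x u v (K x w) = K x (curv Γo x u v w))
    (v w : E) :
    LinearMap.trace ℝ E (curvMap Γo Γs x v w)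
      + LinearMap.trace ℝ E (curvMap Γo Γs x w v) = 0 := by
  have sI := ricci_star (A := I) (B := J) hU hx hΓs hΓsd htf qx.i2 qx.j2
    (fun z => by rw [qx.ji, qx.kj, neg_neg]) hcI hcJ
  have sJ := ricci_star (A := J) (B := K) hU hx hΓs hΓsd htf qx.j2 qx.k2
    (fun z => by rw [qx.jk, qx.ki]) hcJ hcK
  have sK := ricci_star (A := K) (B := I) hU hx hΓs hΓsd htf qx.k2 qx.i2
    (fun z => by rw [qx.ki, qx.ij]) hcK hcI
  have h1 := sK v w
  have h2 : LinearMap.trace ℝ E (curvMap Γo Γs x (K x v) (K x w))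
      = LinearMap.trace ℝ E (curvMap Γo Γs x v w) := by
    have e1 : K x v = I x (J x v) := (qx.ij v).symm
    have e2 : K x w = I x (J x w) := (qx.ij w).symm
    rw [e1, e2, sI (J x v) (J x w), sJ w v]
    ring
  rw [h2] at h1
  linarith

end Curvature

/-- On a 4-dimensional hypercomplex manifold `(M,I,J,K)`, every
hyperhermitian metric `g` is Einstein–Weyl with respect to the Obata connection: there is a
1-form `ω` with `∇^Ob g = ω ⊗ g` and the symmetrised Ricci tensor of `∇^Ob` proportional to
`g`; consequently `dF_I = ω ∧ F_I`, `dF_J = ω ∧ F_J` and `dF_K = ω ∧ F_K`. -/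
theorem hyperhermitian_dim_four_einstein_weyl_obata
    (hdim : Module.finrank ℝ E = 4)
    (U : Set E) (hU : IsOpen U) (I J K : E → E →L[ℝ] E) (g : E → E →ₗ[ℝ] E →ₗ[ℝ] ℝ)
    (hhc : IsHypercomplexOn U I J K) (hherm : IsHyperHermitianOn U I J K g)
    (ΓOb : E → E →L[ℝ] E →L[ℝ] E) (hOb : IsObataOn U I J K ΓOb) :
    ∃ ω : E → E →ₗ[ℝ] ℝ,
      (∀ x ∈ U, ∀ u v w,
        fderiv ℝ (fun y => g y v w) x u - g x (ΓOb x u v) w - g x v (ΓOb x u w)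
          = ω x u * g x v w) ∧
      (∃ Λ : E → ℝ, ∀ x ∈ U, ∀ b : Module.Basis (Fin 4) ℝ E, ∀ v w,
        (1 / 2) * (ricci ΓOb b x v w + ricci ΓOb b x w v) = Λ x * g x v w) ∧
      (∀ x ∈ U, ∀ u v w, d2 (kaehlerForm I g) x u v w
          = wedge12 (fun y p => ω y p) (kaehlerForm I g) x u v w) ∧
      (∀ x ∈ U, ∀ u v w, d2 (kaehlerForm J g) x u v w
          = wedge12 (fun y p => ω y p) (kaehlerForm J g) x u v w) ∧
      (∀ x ∈ U, ∀ u v w, d2 (kaehlerForm K g) x u v w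
          = wedge12 (fun y p => ω y p) (kaehlerForm K g) x u v w) := by
  classical
  have hGsm : ContDiffOn ℝ (⊤ : ℕ∞) (Gc g) U := contDiffOn_Gc hherm.smooth
  have hGdiff : ∀ x ∈ U, DifferentiableAt ℝ (Gc g) x := fun x hx =>
    (hGsm.differentiableOn (by simp)).differentiableAt (hU.mem_nhds hx)
  have hId : ∀ x ∈ U, DifferentiableAt ℝ I x := fun x hx =>
    diffAt_of_contDiffOn hU hhc.acsI.smooth hx
  have hJd : ∀ x ∈ U, DifferentiableAt ℝ J x := fun x hx =>
    diffAt_of_contDiffOn hU hhc.acsJ.smooth hx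
  have hKd : ∀ x ∈ U, DifferentiableAt ℝ K x := fun x hx =>
    diffAt_of_contDiffOn hU hhc.acsK.smooth hx
  have hnontriv : Nontrivial E := by
    refine Module.nontrivial_of_finrank_pos (R := ℝ) (M := E) ?_
    rw [hdim]; norm_num
  have hchoice : ∀ x, x ∈ U → ∃ u₀ : E, Gc g x u₀ u₀ ≠ 0 := fun x hx =>
    exists_diag_ne_zero (g := Gc g x) (fun u v => hherm.symm x hx u v)
      (fun u hu => hherm.nondeg x hx u hu)
  set u0 : E → E := fun x => if hx : x ∈ U then (hchoice x hx).choose else 0 with hu0def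
  have hu0 : ∀ x, x ∈ U → Gc g x (u0 x) (u0 x) ≠ 0 := by
    intro x hx
    rw [hu0def]
    simp only [dif_pos hx]
    exact (hchoice x hx).choose_spec
  set ω : E → E →ₗ[ℝ] ℝ := fun x =>
    if hx : x ∈ U then (g x (u0 x) (u0 x))⁻¹ • nablaLin g ΓOb x (u0 x) (u0 x) else 0 with hωdef
  have hωval : ∀ x ∈ U, ∀ u, ω x u
      = (g x (u0 x) (u0 x))⁻¹ * nablaG g ΓOb x u (u0 x) (u0 x) := by
    intro x hx u
    rw [hωdef]
    simp only [dif_pos hx, LinearMap.smul_apply, smul_eq_mul]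
    rfl
  have hωeq : ∀ x ∈ U, ∀ u v w, nablaG g ΓOb x u v w = ω x u * g x v w := by
    intro x hx u v w
    have qx := quatRel_of_hc hhc hx
    have hGd := hGdiff x hx
    have hnsym : ∀ a b, nablaG g ΓOb x u a b = nablaG g ΓOb x u b a := by
      intro a b
      have hf : fderiv ℝ (Gc g) x u a b = fderiv ℝ (Gc g) x u b a := by
        rw [← fderiv_eval2 hGd a b u, ← fderiv_eval2 hGd b a u]
        have he : (fun y => Gc g y a b) =ᶠ[𝓝 x] (fun y => Gc g y b a) :=
          Filter.eventuallyEq_of_mem (hU.mem_nhds hx) (fun y hy => hherm.symm y hy a b)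
        rw [he.fderiv_eq]
      rw [nablaG_apply, nablaG_apply, hf]
      have s1 := hherm.symm x hx (ΓOb x u a) b
      have s2 := hherm.symm x hx a (ΓOb x u b)
      linarith
    have hnI := nablaG_herm hU hx hGd (hId x hx) hherm.hermI (hOb.parI x hx)
    have hnJ := nablaG_herm hU hx hGd (hJd x hx) hherm.hermJ (hOb.parJ x hx)
    have hnK := nablaG_herm hU hx hGd (hKd x hx) hherm.hermK (hOb.parK x hx)
    have hp := herm_proportional qx hdim hnsym (fun a b => hnI u a b) (fun a b => hnJ u a b)
      (fun a b => hnK u a b) (fun a b => hherm.symm x hx a b)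
      (fun a b => hherm.hermI x hx a b) (fun a b => hherm.hermJ x hx a b)
      (fun a b => hherm.hermK x hx a b) (u0 x) (hu0 x hx) v w
    simp only [Gc_apply] at hp
    rw [hωval x hx u]
    have hne : g x (u0 x) (u0 x) ≠ 0 := by
      have := hu0 x hx
      simpa using this
    field_simp
    linear_combination hp
  have hΓs : ∀ y ∈ U, ∀ a b, ΓOb y a b = Γf I J K y a b := fun y hy =>
    gammaOb_eq hU hhc hOb hy
  refine ⟨ω, ?_, ⟨fun _ => 0, ?_⟩, ?_, ?_, ?_⟩
  · intro x hx u v w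
    have h := hωeq x hx u v w
    rw [nablaG_apply] at h
    rw [fderiv_g_eq (hGdiff x hx)]
    linarith
  · intro x hx b v w
    have hΓsd : DifferentiableAt ℝ (Γf I J K) x :=
      (((contDiffOn_Γf hU hhc.acsI.smooth hhc.acsJ.smooth
        hhc.acsK.smooth).differentiableOn (by simp)).differentiableAt (hU.mem_nhds hx))
    have hqx := quatRel_of_hc hhc hx
    have hDId : DifferentiableAt ℝ (fderiv ℝ I) x :=
      (((hhc.acsI.smooth.fderiv_of_isOpen hU (by simp) :
        ContDiffOn ℝ (⊤ : ℕ∞) (fderiv ℝ I) U).differentiableOn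
          (by simp)).differentiableAt (hU.mem_nhds hx))
    have hDJd : DifferentiableAt ℝ (fderiv ℝ J) x :=
      (((hhc.acsJ.smooth.fderiv_of_isOpen hU (by simp) :
        ContDiffOn ℝ (⊤ : ℕ∞) (fderiv ℝ J) U).differentiableOn
          (by simp)).differentiableAt (hU.mem_nhds hx))
    have hDKd : DifferentiableAt ℝ (fderiv ℝ K) x :=
      (((hhc.acsK.smooth.fderiv_of_isOpen hU (by simp) :
        ContDiffOn ℝ (⊤ : ℕ∞) (fderiv ℝ K) U).differentiableOn
          (by simp)).differentiableAt (hU.mem_nhds hx))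
    have hcI := curv_commute hU hx hΓs hΓsd (fun y hy => hId y hy) hDId
      (fun y hy u v => hOb.parI y hy u v)
    have hcJ := curv_commute hU hx hΓs hΓsd (fun y hy => hJd y hy) hDJd
      (fun y hy u v => hOb.parJ y hy u v)
    have hcK := curv_commute hU hx hΓs hΓsd (fun y hy => hKd y hy) hDKd
      (fun y hy u v => hOb.parK y hy u v)
    have hanti := ricci_antisym hU hx hΓs hΓsd
      (fun y hy a b' => hOb.torsionFree y hy a b') hqx hcI hcJ hcK v w
    rw [ricci_eq_trace hU hx hΓs hΓsd b v w, ricci_eq_trace hU hx hΓs hΓsd b w v, zero_mul]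
    linarith
  · intro x hx u v w
    have h := dF_eq (A := I) (hGdiff x hx) (hId x hx) (hωeq x hx)
      (hOb.parI x hx) (hOb.torsionFree x hx) (hherm.symm x hx) (hherm.hermI x hx)
      (hhc.acsI.square x hx) u v w
    simpa [wedge12] using h
  · intro x hx u v w
    have h := dF_eq (A := J) (hGdiff x hx) (hJd x hx) (hωeq x hx)
      (hOb.parJ x hx) (hOb.torsionFree x hx) (hherm.symm x hx) (hherm.hermJ x hx)
      (hhc.acsJ.square x hx) u v w
    simpa [wedge12] using h
  · intro x hx u v w
    have h := dF_eq (A := K) (hGdiff x hx) (hKd x hx) (hωeq x hx)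
      (hOb.parK x hx) (hOb.torsionFree x hx) (hherm.symm x hx) (hherm.hermK x hx)
      (hhc.acsK.square x hx) u v w
    simpa [wedge12] using h

end HKTPaper
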